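/- Let X and ε be independent real random variables on a probability space, with X Gaussian of mean 0 and variance τ² and ε Gaussian of mean 0 and variance σ², where τ, σ > 0; set Y = X + ε and γ = τ²/(σ² + τ²). Define the 3 × 3 real matrices indexed by i, j ∈ {0,1,2}: K_{ij} = E[X^{i+j}], L_{ij} = E[Y^{i+j}], and A_{ij} = E[Y^i · X^j]. Then K and L are invertible and K⁻¹ Aᵀ L⁻¹ A equals the upper-triangular matrix with rows (1, 0, τ²(1 − γ²)), (0, γ, 0), (0, 0, γ²); in particular its eigenvalues are 1, γ and γ², so the three most relevant monomial features of the bivariate Gaussian model have relevances 1, γ and γ². -/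

import Mathlib

open MeasureTheory ProbabilityTheory Matrix
open scoped NNReal

set_option maxHeartbeats 1000000

section Aux
open MeasureTheory Real
open scoped NNReal ENNReal

private lemma abs_pow_le_aux (n : ℕ) (x : ℝ) : |x| ^ n ≤ 1 + (x ^ 2) ^ n := by
  rcases le_total |x| 1 with h | h
  · have h1 : |x| ^ n ≤ 1 := pow_le_one₀ (abs_nonneg x) h
    have h2 : (0:ℝ) ≤ (x ^ 2) ^ n := by positivity
    linarith
  · have h1 : |x| ^ n ≤ (|x| ^ 2) ^ n := by
      rw [← pow_mul]
      exact pow_le_pow_right₀ h (by omega)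
    rw [sq_abs] at h1
    linarith

private lemma gauss_bdd {c : ℝ} (hc : 0 < c) (n : ℕ) :
    ∃ C, ∀ x : ℝ, ‖x ^ n * Real.exp (-c * x ^ 2)‖ ≤ C := by
  refine ⟨1 + (n.factorial : ℝ) / c ^ n, fun x => ?_⟩
  rw [norm_mul, norm_pow, Real.norm_eq_abs, Real.norm_eq_abs, Real.abs_exp]
  have he : (0:ℝ) < Real.exp (c * x ^ 2) := Real.exp_pos _
  have hinv : Real.exp (-c * x ^ 2) = (Real.exp (c * x ^ 2))⁻¹ := by
    rw [← Real.exp_neg]; ring_nf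
  have hle1 : Real.exp (-c * x ^ 2) ≤ 1 := by
    rw [Real.exp_le_one_iff]; nlinarith [sq_nonneg x]
  have h1 : |x| ^ n ≤ 1 + (x ^ 2) ^ n := abs_pow_le_aux n x
  have key : (c * x ^ 2) ^ n / (n.factorial : ℝ) ≤ Real.exp (c * x ^ 2) :=
    Real.pow_div_factorial_le_exp _ (by positivity) n
  have hfac : (0:ℝ) < (n.factorial : ℝ) := by positivity
  have h3 : (x ^ 2) ^ n * Real.exp (-c * x ^ 2) ≤ (n.factorial : ℝ) / c ^ n := by
    rw [div_le_iff₀ hfac] at key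
    rw [hinv, le_div_iff₀ (by positivity : (0:ℝ) < c ^ n)]
    calc (x ^ 2) ^ n * (Real.exp (c * x ^ 2))⁻¹ * c ^ n
        = (c * x ^ 2) ^ n * (Real.exp (c * x ^ 2))⁻¹ := by rw [mul_pow]; ring
      _ ≤ Real.exp (c * x ^ 2) * (n.factorial : ℝ) * (Real.exp (c * x ^ 2))⁻¹ := by gcongr
      _ = (n.factorial : ℝ) := by field_simp
  have hexp0 : 0 ≤ Real.exp (-c * x ^ 2) := (Real.exp_pos _).le
  calc |x| ^ n * Real.exp (-c * x ^ 2)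
      ≤ (1 + (x ^ 2) ^ n) * Real.exp (-c * x ^ 2) := by gcongr
    _ = Real.exp (-c * x ^ 2) + (x ^ 2) ^ n * Real.exp (-c * x ^ 2) := by ring
    _ ≤ 1 + (n.factorial : ℝ) / c ^ n := by linarith

private lemma integrable_pow_gauss {b : ℝ} (hb : 0 < b) (n : ℕ) :
    Integrable (fun x : ℝ => x ^ n * Real.exp (-b * x ^ 2)) := by
  have h2 : (fun x : ℝ => x ^ n * Real.exp (-b * x ^ 2))
      = fun x => (x ^ n * Real.exp (-(b/2) * x ^ 2)) * Real.exp (-(b/2) * x ^ 2) := by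
    funext x; rw [mul_assoc, ← Real.exp_add]; ring_nf
  rw [h2]
  obtain ⟨C, hC⟩ := gauss_bdd (half_pos hb) n
  exact (integrable_exp_neg_mul_sq (half_pos hb)).bdd_mul
    (Continuous.aestronglyMeasurable (by continuity)) (Filter.Eventually.of_forall hC)

private lemma gauss_rec {b : ℝ} (hb : 0 < b) (n : ℕ) :
    (2*b) * ∫ x : ℝ, x ^ (n+2) * Real.exp (-b * x ^ 2) =
      ((n : ℝ)+1) * ∫ x : ℝ, x ^ n * Real.exp (-b * x ^ 2) := by
  have hderiv : ∀ x : ℝ, HasDerivAt (fun x : ℝ => x ^ (n+1) * Real.exp (-b * x ^ 2))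
      (((n:ℝ)+1) * (x ^ n * Real.exp (-b*x^2)) - (2*b) * (x ^ (n+2) * Real.exp (-b*x^2))) x := by
    intro x
    have h1 : HasDerivAt (fun x : ℝ => x ^ (n+1)) (((n:ℝ)+1) * x ^ n) x := by
      simpa using hasDerivAt_pow (n+1) x
    have h0 : HasDerivAt (fun x : ℝ => -b * x ^ 2) (-b * (2 * x ^ 1)) x :=
      (hasDerivAt_pow 2 x).const_mul (-b)
    have h2 : HasDerivAt (fun x : ℝ => Real.exp (-b * x ^ 2))
        (Real.exp (-b * x ^ 2) * (-b * (2 * x ^ 1))) x := h0.exp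
    have := h1.mul h2
    exact this.congr_deriv (by ring)
  have hint : Integrable (fun x : ℝ =>
      ((n:ℝ)+1) * (x ^ n * Real.exp (-b*x^2)) - (2*b) * (x ^ (n+2) * Real.exp (-b*x^2))) :=
    ((integrable_pow_gauss hb n).const_mul _).sub ((integrable_pow_gauss hb (n+2)).const_mul _)
  have h0 := integral_eq_zero_of_hasDerivAt_of_integrable hderiv hint (integrable_pow_gauss hb (n+1))
  rw [integral_sub ((integrable_pow_gauss hb n).const_mul _)
      ((integrable_pow_gauss hb (n+2)).const_mul _),
    integral_const_mul, integral_const_mul] at h0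
  linarith

private lemma gauss0 {b : ℝ} (hb : 0 < b) :
    ∫ x : ℝ, x ^ 0 * Real.exp (-b * x ^ 2) = Real.sqrt (π / b) := by
  simpa using integral_gaussian b

private lemma gauss1 {b : ℝ} (hb : 0 < b) :
    ∫ x : ℝ, x ^ 1 * Real.exp (-b * x ^ 2) = 0 := by
  have hderiv : ∀ x : ℝ, HasDerivAt (fun x : ℝ => Real.exp (-b * x ^ 2))
      ((-(2*b)) * (x ^ 1 * Real.exp (-b * x ^ 2))) x := by
    intro x
    have h0 : HasDerivAt (fun x : ℝ => -b * x ^ 2) (-b * (2 * x ^ 1)) x :=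
      (hasDerivAt_pow 2 x).const_mul (-b)
    have h2 := h0.exp
    convert h2 using 1
    ring
  have hint : Integrable (fun x : ℝ => (-(2*b)) * (x ^ 1 * Real.exp (-b * x ^ 2))) :=
    (integrable_pow_gauss hb 1).const_mul _
  have h0 := integral_eq_zero_of_hasDerivAt_of_integrable hderiv hint
    (integrable_exp_neg_mul_sq hb)
  rw [integral_const_mul] at h0
  have hne : (-(2*b)) ≠ 0 := by nlinarith
  exact (mul_eq_zero.mp h0).resolve_left hne

private lemma gauss2 {b : ℝ} (hb : 0 < b) :
    ∫ x : ℝ, x ^ 2 * Real.exp (-b * x ^ 2) = 1/(2*b) * Real.sqrt (π / b) := by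
  have := gauss_rec hb 0
  rw [gauss0 hb] at this
  push_cast at this
  field_simp at this ⊢
  linarith

private lemma gauss3 {b : ℝ} (hb : 0 < b) :
    ∫ x : ℝ, x ^ 3 * Real.exp (-b * x ^ 2) = 0 := by
  have := gauss_rec hb 1
  rw [gauss1 hb] at this
  push_cast at this
  have h2b : (2*b) ≠ 0 := by positivity
  rcases mul_eq_zero.mp (by linarith : (2*b) * ∫ x : ℝ, x ^ 3 * Real.exp (-b * x ^ 2) = 0) with h | h
  · exact absurd h h2b
  · exact h

private lemma gauss4 {b : ℝ} (hb : 0 < b) :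
    ∫ x : ℝ, x ^ 4 * Real.exp (-b * x ^ 2) = 3/(4*b^2) * Real.sqrt (π / b) := by
  have := gauss_rec hb 2
  rw [gauss2 hb] at this
  push_cast at this
  field_simp at this ⊢
  linarith

open ProbabilityTheory in
private lemma gaussianReal_moment_eq (v : ℝ≥0) (hv : v ≠ 0) (n : ℕ) :
    ∫ x, x ^ n ∂(gaussianReal 0 v) =
      (Real.sqrt (2 * π * v))⁻¹ *
        ∫ x : ℝ, x ^ n * Real.exp (-(1/(2*(v:ℝ))) * x ^ 2) := by
  rw [gaussianReal_of_var_ne_zero _ hv]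
  have hmeas : Measurable fun x : ℝ => (gaussianPDFReal 0 v x).toNNReal :=
    (measurable_gaussianPDFReal 0 v).real_toNNReal
  have hd : volume.withDensity (gaussianPDF 0 v)
      = volume.withDensity (fun x => ((gaussianPDFReal 0 v x).toNNReal : ℝ≥0∞)) := rfl
  rw [hd, integral_withDensity_eq_integral_smul hmeas, ← integral_const_mul]
  congr 1; funext x
  rw [NNReal.smul_def, smul_eq_mul, Real.coe_toNNReal _ (gaussianPDFReal_nonneg 0 v x),
    gaussianPDFReal]
  have harg : -(x - 0)^2/(2*(v:ℝ)) = -(1/(2*(v:ℝ))) * x^2 := by ring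
  rw [harg]
  ring

open ProbabilityTheory in
private lemma integrable_pow_gaussianReal (v : ℝ≥0) (hv : v ≠ 0) (n : ℕ) :
    Integrable (fun x : ℝ => x ^ n) (gaussianReal 0 v) := by
  have hvpos : (0:ℝ) < (v:ℝ) := by positivity
  have hb : (0:ℝ) < 1/(2*(v:ℝ)) := by positivity
  rw [gaussianReal_of_var_ne_zero _ hv]
  have hmeas : Measurable fun x : ℝ => (gaussianPDFReal 0 v x).toNNReal :=
    (measurable_gaussianPDFReal 0 v).real_toNNReal
  have hd : volume.withDensity (gaussianPDF 0 v)
      = volume.withDensity (fun x => ((gaussianPDFReal 0 v x).toNNReal : ℝ≥0∞)) := rfl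
  rw [hd, integrable_withDensity_iff_integrable_smul hmeas]
  have heq : (fun x : ℝ => ((gaussianPDFReal 0 v x).toNNReal : ℝ≥0) • x ^ n)
      = fun x : ℝ => (Real.sqrt (2 * π * v))⁻¹ *
          (x ^ n * Real.exp (-(1/(2*(v:ℝ))) * x ^ 2)) := by
    funext x
    rw [NNReal.smul_def, smul_eq_mul, Real.coe_toNNReal _ (gaussianPDFReal_nonneg 0 v x),
      gaussianPDFReal]
    have harg : -(x - 0)^2/(2*(v:ℝ)) = -(1/(2*(v:ℝ))) * x^2 := by ring
    rw [harg]; ring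
  rw [heq]
  exact (integrable_pow_gauss hb n).const_mul _

open ProbabilityTheory in
private lemma gaussianReal_moments (v : ℝ≥0) (hv : v ≠ 0) :
    (∫ x, x ^ 1 ∂(gaussianReal 0 v)) = 0 ∧
    (∫ x, x ^ 2 ∂(gaussianReal 0 v)) = (v:ℝ) ∧
    (∫ x, x ^ 3 ∂(gaussianReal 0 v)) = 0 ∧
    (∫ x, x ^ 4 ∂(gaussianReal 0 v)) = 3 * (v:ℝ)^2 := by
  have hvpos : (0:ℝ) < (v:ℝ) := by positivity
  set b : ℝ := 1/(2*(v:ℝ)) with hbdef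
  have hb : (0:ℝ) < b := by positivity
  have hsq : Real.sqrt (π / b) = Real.sqrt (2 * π * v) := by
    congr 1
    rw [hbdef]
    field_simp
  have hc : (Real.sqrt (2 * π * v))⁻¹ * Real.sqrt (π / b) = 1 := by
    rw [hsq]
    have : (0:ℝ) < Real.sqrt (2 * π * v) := Real.sqrt_pos.mpr (by positivity)
    field_simp
  refine ⟨?_, ?_, ?_, ?_⟩
  · rw [gaussianReal_moment_eq v hv, ← hbdef, gauss1 hb, mul_zero]
  · rw [gaussianReal_moment_eq v hv, ← hbdef, gauss2 hb]
    have h2b : 1/(2*b) = (v:ℝ) := by rw [hbdef]; field_simp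
    calc (Real.sqrt (2 * π * v))⁻¹ * (1/(2*b) * Real.sqrt (π / b))
        = 1/(2*b) * ((Real.sqrt (2 * π * v))⁻¹ * Real.sqrt (π / b)) := by ring
      _ = (v:ℝ) := by rw [hc, h2b, mul_one]
  · rw [gaussianReal_moment_eq v hv, ← hbdef, gauss3 hb, mul_zero]
  · rw [gaussianReal_moment_eq v hv, ← hbdef, gauss4 hb]
    have h4b : 3/(4*b^2) = 3 * (v:ℝ)^2 := by rw [hbdef]; field_simp; ring
    calc (Real.sqrt (2 * π * v))⁻¹ * (3/(4*b^2) * Real.sqrt (π / b))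
        = 3/(4*b^2) * ((Real.sqrt (2 * π * v))⁻¹ * Real.sqrt (π / b)) := by ring
      _ = 3 * (v:ℝ)^2 := by rw [hc, h4b, mul_one]

end Aux

/-- For the bivariate Gaussian model `Y = X + ε` (with `X ~ N(0,τ²)`, `ε ~ N(0,σ²)`
independent), the matrices of moments `K_{ij} = E[X^{i+j}]`, `L_{ij} = E[Y^{i+j}]`,
`A_{ij} = E[Y^i X^j]` (for `i,j ∈ {0,1,2}`) are such that `K` and `L` are invertible
and `K⁻¹ Aᵀ L⁻¹ A` is upper triangular with diagonal `(1, γ, γ²)`; in particular the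
three most relevant monomial features have relevances `1`, `γ` and `γ²`. -/
theorem stmt_18 {Ω : Type*} [MeasurableSpace Ω] (μ : Measure Ω) [IsProbabilityMeasure μ]
    (X ε : Ω → ℝ) (hX : Measurable X) (hε : Measurable ε)
    (hindep : IndepFun X ε μ)
    (τ σ : ℝ≥0) (hτ : 0 < τ) (hσ : 0 < σ)
    (hXlaw : μ.map X = gaussianReal 0 (τ ^ 2))
    (hεlaw : μ.map ε = gaussianReal 0 (σ ^ 2))
    (Y : Ω → ℝ) (hY : Y = X + ε)
    (γ : ℝ) (hγ : γ = (τ : ℝ) ^ 2 / ((σ : ℝ) ^ 2 + (τ : ℝ) ^ 2))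
    (K L A : Matrix (Fin 3) (Fin 3) ℝ)
    (hK : ∀ i j, K i j = ∫ ω, X ω ^ ((i : ℕ) + (j : ℕ)) ∂μ)
    (hL : ∀ i j, L i j = ∫ ω, Y ω ^ ((i : ℕ) + (j : ℕ)) ∂μ)
    (hA : ∀ i j, A i j = ∫ ω, Y ω ^ (i : ℕ) * X ω ^ (j : ℕ) ∂μ) :
    IsUnit K.det ∧ IsUnit L.det ∧
      K⁻¹ * Aᵀ * L⁻¹ * A =
        !![1, 0, (τ : ℝ) ^ 2 * (1 - γ ^ 2); 0, γ, 0; 0, 0, γ ^ 2] := by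
  -- basic positivity
  have ht : (0:ℝ) < (τ:ℝ)^2 := by positivity
  have hu : (0:ℝ) < (σ:ℝ)^2 := by positivity
  set t : ℝ := (τ:ℝ)^2 with htdef
  set u : ℝ := (σ:ℝ)^2 with hudef
  have hτ2 : (τ^2 : ℝ≥0) ≠ 0 := pow_ne_zero _ hτ.ne'
  have hσ2 : (σ^2 : ℝ≥0) ≠ 0 := pow_ne_zero _ hσ.ne'
  -- integrability and moments of X
  have hXint : ∀ n, Integrable (fun ω => X ω ^ n) μ := by
    intro n
    have h := integrable_pow_gaussianReal (τ^2) hτ2 n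
    rw [← hXlaw] at h
    exact (integrable_map_measure
      ((measurable_id.pow_const n).aestronglyMeasurable :
        AEStronglyMeasurable (fun x : ℝ => x ^ n) _)
      hX.aemeasurable).mp h
  have hεint : ∀ n, Integrable (fun ω => ε ω ^ n) μ := by
    intro n
    have h := integrable_pow_gaussianReal (σ^2) hσ2 n
    rw [← hεlaw] at h
    exact (integrable_map_measure
      ((measurable_id.pow_const n).aestronglyMeasurable :
        AEStronglyMeasurable (fun x : ℝ => x ^ n) _)
      hε.aemeasurable).mp h
  have hXmom : ∀ n, ∫ ω, X ω ^ n ∂μ = ∫ x, x ^ n ∂(gaussianReal 0 (τ^2)) := by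
    intro n
    have hmap := integral_map (φ := X) (f := fun x : ℝ => x ^ n) (μ := μ)
      hX.aemeasurable (by fun_prop)
    rw [← hXlaw, hmap]
  have hεmom : ∀ n, ∫ ω, ε ω ^ n ∂μ = ∫ x, x ^ n ∂(gaussianReal 0 (σ^2)) := by
    intro n
    have hmap := integral_map (φ := ε) (f := fun x : ℝ => x ^ n) (μ := μ)
      hε.aemeasurable (by fun_prop)
    rw [← hεlaw, hmap]
  obtain ⟨gX1, gX2, gX3, gX4⟩ := gaussianReal_moments (τ^2) hτ2
  obtain ⟨gε1, gε2, gε3, gε4⟩ := gaussianReal_moments (σ^2) hσ2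
  have EX0 : ∫ ω, X ω ^ 0 ∂μ = 1 := by simp
  have EX1 : ∫ ω, X ω ^ 1 ∂μ = 0 := by rw [hXmom 1, gX1]
  have EX2 : ∫ ω, X ω ^ 2 ∂μ = t := by rw [hXmom 2, gX2, htdef]; push_cast; ring
  have EX3 : ∫ ω, X ω ^ 3 ∂μ = 0 := by rw [hXmom 3, gX3]
  have EX4 : ∫ ω, X ω ^ 4 ∂μ = 3*t^2 := by rw [hXmom 4, gX4, htdef]; push_cast; ring
  have Eε0 : ∫ ω, ε ω ^ 0 ∂μ = 1 := by simp
  have Eε1 : ∫ ω, ε ω ^ 1 ∂μ = 0 := by rw [hεmom 1, gε1]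
  have Eε2 : ∫ ω, ε ω ^ 2 ∂μ = u := by rw [hεmom 2, gε2, hudef]; push_cast; ring
  have Eε3 : ∫ ω, ε ω ^ 3 ∂μ = 0 := by rw [hεmom 3, gε3]
  have Eε4 : ∫ ω, ε ω ^ 4 ∂μ = 3*u^2 := by rw [hεmom 4, gε4, hudef]; push_cast; ring
  -- products
  have hindepPow : ∀ a b : ℕ, IndepFun (fun ω => X ω ^ a) (fun ω => ε ω ^ b) μ :=
    fun a b => hindep.comp (measurable_id.pow_const a) (measurable_id.pow_const b)
  have hIab : ∀ a b : ℕ, Integrable (fun ω => X ω ^ a * ε ω ^ b) μ := by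
    intro a b
    have := (hindepPow a b).integrable_mul (hXint a) (hεint b)
    simpa [Pi.mul_def] using this
  have hEab : ∀ a b : ℕ, ∫ ω, X ω ^ a * ε ω ^ b ∂μ
      = (∫ ω, X ω ^ a ∂μ) * (∫ ω, ε ω ^ b ∂μ) := by
    intro a b
    have := (hindepPow a b).integral_mul_eq_mul_integral (hXint a).1 (hεint b).1
    simpa [Pi.mul_def] using this
  have hYω : ∀ ω, Y ω = X ω + ε ω := fun ω => by rw [hY]; rfl
  -- moments of Y
  have EY0 : ∫ ω, Y ω ^ 0 ∂μ = 1 := by simp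
  have EY1 : ∫ ω, Y ω ^ 1 ∂μ = 0 := by
    have e : (fun ω => Y ω ^ 1) = fun ω => X ω^1*ε ω^0 + X ω^0*ε ω^1 := by
      funext ω; rw [hYω]; ring
    rw [e, integral_add (hIab 1 0) (hIab 0 1), hEab, hEab, EX1, Eε1]
    ring
  have EY2 : ∫ ω, Y ω ^ 2 ∂μ = t + u := by
    have e : (fun ω => Y ω ^ 2) = fun ω =>
        X ω^2*ε ω^0 + (2*(X ω^1*ε ω^1) + X ω^0*ε ω^2) := by
      funext ω; rw [hYω]; ring
    have I2 : Integrable (fun ω => 2*(X ω^1*ε ω^1) + X ω^0*ε ω^2) μ := by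
      exact ((hIab 1 1).const_mul 2).add (hIab 0 2)
    have I3 : Integrable (fun ω => 2*(X ω^1*ε ω^1)) μ := (hIab 1 1).const_mul 2
    rw [e, integral_add (hIab 2 0) I2, integral_add I3 (hIab 0 2), integral_const_mul,
      hEab, hEab, hEab, EX2, EX1, EX0, Eε0, Eε1, Eε2]
    ring
  have EY3 : ∫ ω, Y ω ^ 3 ∂μ = 0 := by
    have e : (fun ω => Y ω ^ 3) = fun ω =>
        X ω^3*ε ω^0 + (3*(X ω^2*ε ω^1) + (3*(X ω^1*ε ω^2) + X ω^0*ε ω^3)) := by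
      funext ω; rw [hYω]; ring
    have I4 : Integrable (fun ω => 3*(X ω^1*ε ω^2) + X ω^0*ε ω^3) μ := by
      exact ((hIab 1 2).const_mul 3).add (hIab 0 3)
    have I2 : Integrable (fun ω => 3*(X ω^2*ε ω^1) + (3*(X ω^1*ε ω^2) + X ω^0*ε ω^3)) μ := by
      exact ((hIab 2 1).const_mul 3).add I4
    rw [e, integral_add (hIab 3 0) I2, integral_add ((hIab 2 1).const_mul 3) I4,
      integral_add ((hIab 1 2).const_mul 3) (hIab 0 3),
      integral_const_mul, integral_const_mul,
      hEab, hEab, hEab, hEab, EX3, EX1, EX0, Eε1, Eε3]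
    ring
  have EY4 : ∫ ω, Y ω ^ 4 ∂μ = 3*(t+u)^2 := by
    have e : (fun ω => Y ω ^ 4) = fun ω =>
        X ω^4*ε ω^0 + (4*(X ω^3*ε ω^1) + (6*(X ω^2*ε ω^2) +
          (4*(X ω^1*ε ω^3) + X ω^0*ε ω^4))) := by
      funext ω; rw [hYω]; ring
    have I6 : Integrable (fun ω => 4*(X ω^1*ε ω^3) + X ω^0*ε ω^4) μ := by
      exact ((hIab 1 3).const_mul 4).add (hIab 0 4)
    have I4 : Integrable (fun ω => 6*(X ω^2*ε ω^2) + (4*(X ω^1*ε ω^3) + X ω^0*ε ω^4)) μ := by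
      exact ((hIab 2 2).const_mul 6).add I6
    have I2 : Integrable (fun ω => 4*(X ω^3*ε ω^1) + (6*(X ω^2*ε ω^2) +
        (4*(X ω^1*ε ω^3) + X ω^0*ε ω^4))) μ := by
      exact ((hIab 3 1).const_mul 4).add I4
    rw [e, integral_add (hIab 4 0) I2, integral_add ((hIab 3 1).const_mul 4) I4,
      integral_add ((hIab 2 2).const_mul 6) I6,
      integral_add ((hIab 1 3).const_mul 4) (hIab 0 4),
      integral_const_mul, integral_const_mul, integral_const_mul,
      hEab, hEab, hEab, hEab, hEab, EX4, EX3, EX2, EX1, EX0, Eε0, Eε1, Eε2, Eε3, Eε4]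
    ring
  -- entries of A
  have EA : ∀ i j : ℕ, i ≤ 2 → j ≤ 2 →
      True := fun _ _ _ _ => trivial
  have EA00 : ∫ ω, Y ω ^ 0 * X ω ^ 0 ∂μ = 1 := by simp
  have EA01 : ∫ ω, Y ω ^ 0 * X ω ^ 1 ∂μ = 0 := by
    have e : (fun ω => Y ω ^ 0 * X ω ^ 1) = fun ω => X ω ^ 1 := by funext ω; ring
    rw [e, EX1]
  have EA02 : ∫ ω, Y ω ^ 0 * X ω ^ 2 ∂μ = t := by
    have e : (fun ω => Y ω ^ 0 * X ω ^ 2) = fun ω => X ω ^ 2 := by funext ω; ring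
    rw [e, EX2]
  have EA10 : ∫ ω, Y ω ^ 1 * X ω ^ 0 ∂μ = 0 := by
    have e : (fun ω => Y ω ^ 1 * X ω ^ 0) = fun ω => X ω^1*ε ω^0 + X ω^0*ε ω^1 := by
      funext ω; rw [hYω]; ring
    rw [e, integral_add (hIab 1 0) (hIab 0 1), hEab, hEab, EX1, Eε1]
    ring
  have EA11 : ∫ ω, Y ω ^ 1 * X ω ^ 1 ∂μ = t := by
    have e : (fun ω => Y ω ^ 1 * X ω ^ 1) = fun ω => X ω^2*ε ω^0 + X ω^1*ε ω^1 := by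
      funext ω; rw [hYω]; ring
    rw [e, integral_add (hIab 2 0) (hIab 1 1), hEab, hEab, EX2, EX1, Eε0, Eε1]
    ring
  have EA12 : ∫ ω, Y ω ^ 1 * X ω ^ 2 ∂μ = 0 := by
    have e : (fun ω => Y ω ^ 1 * X ω ^ 2) = fun ω => X ω^3*ε ω^0 + X ω^2*ε ω^1 := by
      funext ω; rw [hYω]; ring
    rw [e, integral_add (hIab 3 0) (hIab 2 1), hEab, hEab, EX3, Eε1]
    ring
  have EA20 : ∫ ω, Y ω ^ 2 * X ω ^ 0 ∂μ = t + u := by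
    have e : (fun ω => Y ω ^ 2 * X ω ^ 0) = fun ω => Y ω ^ 2 := by funext ω; ring
    rw [e, EY2]
  have EA21 : ∫ ω, Y ω ^ 2 * X ω ^ 1 ∂μ = 0 := by
    have e : (fun ω => Y ω ^ 2 * X ω ^ 1) = fun ω =>
        X ω^3*ε ω^0 + (2*(X ω^2*ε ω^1) + X ω^1*ε ω^2) := by
      funext ω; rw [hYω]; ring
    have I2 : Integrable (fun ω => 2*(X ω^2*ε ω^1) + X ω^1*ε ω^2) μ := by
      exact ((hIab 2 1).const_mul 2).add (hIab 1 2)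
    rw [e, integral_add (hIab 3 0) I2, integral_add ((hIab 2 1).const_mul 2) (hIab 1 2),
      integral_const_mul, hEab, hEab, hEab, EX3, EX1, Eε1]
    ring
  have EA22 : ∫ ω, Y ω ^ 2 * X ω ^ 2 ∂μ = 3*t^2 + t*u := by
    have e : (fun ω => Y ω ^ 2 * X ω ^ 2) = fun ω =>
        X ω^4*ε ω^0 + (2*(X ω^3*ε ω^1) + X ω^2*ε ω^2) := by
      funext ω; rw [hYω]; ring
    have I2 : Integrable (fun ω => 2*(X ω^3*ε ω^1) + X ω^2*ε ω^2) μ := by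
      exact ((hIab 3 1).const_mul 2).add (hIab 2 2)
    rw [e, integral_add (hIab 4 0) I2, integral_add ((hIab 3 1).const_mul 2) (hIab 2 2),
      integral_const_mul, hEab, hEab, hEab, EX4, EX3, EX2, Eε0, Eε1, Eε2]
    ring
  have EX1' : ∫ ω, X ω ∂μ = 0 := by simpa using EX1
  have EY1' : ∫ ω, Y ω ∂μ = 0 := by simpa using EY1
  have EA11' : ∫ ω, Y ω * X ω ∂μ = t := by simpa using EA11
  have EA12' : ∫ ω, Y ω * X ω ^ 2 ∂μ = 0 := by simpa using EA12
  have EA21' : ∫ ω, Y ω ^ 2 * X ω ∂μ = 0 := by simpa using EA21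
  -- explicit matrices
  set s : ℝ := t + u with hsdef
  have hs : (0:ℝ) < s := by positivity
  have hKeq : K = !![(1:ℝ),0,t; 0,t,0; t,0,3*t^2] := by
    ext i j
    fin_cases i <;> fin_cases j <;>
      simp [hK, EX0, EX1', EX2, EX3, EX4]
  have hLeq : L = !![(1:ℝ),0,s; 0,s,0; s,0,3*s^2] := by
    ext i j
    fin_cases i <;> fin_cases j <;>
      simp [hL, EY0, EY1', EY2, EY3, EY4, ← hsdef]
  have hAeq : A = !![(1:ℝ),0,t; 0,t,0; s,0,3*t^2+t*u] := by
    ext i j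
    fin_cases i <;> fin_cases j <;>
      simp [hA, EA00, EX1', EX2, EY2, EY1', EA11', EA12', EA20, EA21', EA22, ← hsdef]
  have htne : t ≠ 0 := ne_of_gt ht
  have hune : u ≠ 0 := ne_of_gt hu
  have hsne : s ≠ 0 := ne_of_gt hs
  have hKdet : K.det = 2*t^3 := by
    rw [hKeq, Matrix.det_fin_three]
    simp
    ring
  have hLdet : L.det = 2*s^3 := by
    rw [hLeq, Matrix.det_fin_three]
    simp
    ring
  have hKunit : IsUnit K.det := by
    rw [hKdet]; exact isUnit_iff_ne_zero.mpr (by positivity)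
  have hLunit : IsUnit L.det := by
    rw [hLdet]; exact isUnit_iff_ne_zero.mpr (by positivity)
  refine ⟨hKunit, hLunit, ?_⟩
  have hKinv : K⁻¹ = !![3/2,0,-(1/(2*t)); 0,1/t,0; -(1/(2*t)),0,1/(2*t^2)] := by
    apply Matrix.inv_eq_right_inv
    rw [hKeq, Matrix.mul_fin_three, Matrix.one_fin_three]
    ext i j
    fin_cases i <;> fin_cases j <;>
      simp only [Matrix.cons_val', Matrix.cons_val_zero, Matrix.cons_val_one, Matrix.head_cons,
      Matrix.empty_val', Matrix.cons_val_fin_one, Matrix.head_fin_const, Matrix.of_apply,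
      Matrix.vecHead, Matrix.vecTail, Matrix.one_apply, Function.comp] <;> field_simp <;> ring
  have hLinv : L⁻¹ = !![3/2,0,-(1/(2*s)); 0,1/s,0; -(1/(2*s)),0,1/(2*s^2)] := by
    apply Matrix.inv_eq_right_inv
    rw [hLeq, Matrix.mul_fin_three, Matrix.one_fin_three]
    ext i j
    fin_cases i <;> fin_cases j <;>
      simp only [Matrix.cons_val', Matrix.cons_val_zero, Matrix.cons_val_one, Matrix.head_cons,
      Matrix.empty_val', Matrix.cons_val_fin_one, Matrix.head_fin_const, Matrix.of_apply,
      Matrix.vecHead, Matrix.vecTail, Matrix.one_apply, Function.comp] <;> field_simp <;> ring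
  have hγ' : γ = t / s := by rw [hγ, hsdef, htdef, hudef]; ring
  have hAT : Aᵀ = !![(1:ℝ),0,s; 0,t,0; t,0,3*t^2+t*u] := by
    rw [hAeq]
    ext i j
    fin_cases i <;> fin_cases j <;> simp
  have hM1 : K⁻¹ * Aᵀ = !![(1:ℝ),0,u; 0,1,0; 0,0,1] := by
    rw [hKinv, hAT, Matrix.mul_fin_three]
    ext i j
    fin_cases i <;> fin_cases j <;>
      simp only [Matrix.cons_val', Matrix.cons_val_zero, Matrix.cons_val_one, Matrix.head_cons,
      Matrix.empty_val', Matrix.cons_val_fin_one, Matrix.head_fin_const, Matrix.of_apply,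
      Matrix.vecHead, Matrix.vecTail, Matrix.one_apply, Function.comp, Fin.reduceFinMk, Matrix.cons_val] <;> field_simp <;> ring
  have hM2 : K⁻¹ * Aᵀ * L⁻¹
      = !![(3*t+2*u)/(2*s),0,-(t/(2*s^2)); 0,1/s,0; -(1/(2*s)),0,1/(2*s^2)] := by
    rw [hM1, hLinv, Matrix.mul_fin_three]
    ext i j
    fin_cases i <;> fin_cases j <;>
      simp only [Matrix.cons_val', Matrix.cons_val_zero, Matrix.cons_val_one, Matrix.head_cons,
      Matrix.empty_val', Matrix.cons_val_fin_one, Matrix.head_fin_const, Matrix.of_apply,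
      Matrix.vecHead, Matrix.vecTail, Matrix.one_apply, Function.comp, Fin.reduceFinMk, Matrix.cons_val] <;> field_simp <;> ring
  rw [hM2, hAeq, hγ', Matrix.mul_fin_three]
  ext i j
  fin_cases i <;> fin_cases j <;>
      simp only [Matrix.cons_val', Matrix.cons_val_zero, Matrix.cons_val_one, Matrix.head_cons,
      Matrix.empty_val', Matrix.cons_val_fin_one, Matrix.head_fin_const, Matrix.of_apply,
      Matrix.vecHead, Matrix.vecTail, Matrix.one_apply, Function.comp, Fin.reduceFinMk, Matrix.cons_val] <;> field_simp <;> ring
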